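/- At the unique Nash equilibrium of the load-side Cournot game with L ≥ 1 real loads of demands d_l > 0 and V ≥ 1 virtual bidders, with constants α^{RT} > α^{DA} > 0, β^{DA} ∈ ℝ, the real loads' total day-ahead participation equals Σ_{l=1}^{L} d_l^{DA*} = (1 − (V+1)·α^{DA}/((L+V+1)·α^{RT}))·Σ_{l=1}^{L} d_l; this quantity is strictly positive and is strictly decreasing in the number of virtual bidders V. -/

import Mathlib

/-- Expenditure of player `l` in the load-side Cournot game: given demands `dem`, a
profile `p` of day-ahead participations (real-time participation of `k` is
`dem k - p k`), prices are `λ^{DA} = α^{DA}·(∑ k, p k) + β^{DA}` and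
`λ^{RT} = α^{RT}·(∑ k, dem k - p k) + λ^{DA}`, and the expenditure is
`λ^{DA}·p l + λ^{RT}·(dem l - p l)`. -/
noncomputable def expend {ι : Type*} [Fintype ι] (aDA aRT bDA : ℝ)
    (dem p : ι → ℝ) (l : ι) : ℝ :=
  (aDA * ∑ k, p k + bDA) * p l
    + (aRT * ∑ k, (dem k - p k) + (aDA * ∑ k, p k + bDA)) * (dem l - p l)

/-- Nash equilibrium of the load-side Cournot game. -/
def IsNash {ι : Type*} [Fintype ι] [DecidableEq ι] (aDA aRT bDA : ℝ)
    (dem p : ι → ℝ) : Prop :=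
  (∀ k, 0 ≤ p k) ∧
    ∀ l : ι, ∀ y : ℝ, 0 ≤ y →
      expend aDA aRT bDA dem p l ≤ expend aDA aRT bDA dem (Function.update p l y) l

lemma nash_foc {ι : Type*} [Fintype ι] [DecidableEq ι] (aDA aRT bDA : ℝ) (hRT : 0 < aRT)
    (dem p : ι → ℝ) (h : IsNash aDA aRT bDA dem p) (l : ι) :
    0 ≤ aRT * (p l - ∑ k, (dem k - p k)) + (aDA - aRT) * dem l ∧
    p l * (aRT * (p l - ∑ k, (dem k - p k)) + (aDA - aRT) * dem l) = 0 := by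
  set S := ∑ k, p k with hS
  set T := ∑ k, (dem k - p k) with hT
  set x := p l with hx
  set E := aRT * (x - T) + (aDA - aRT) * dem l with hE
  have hx0 : 0 ≤ x := h.1 l
  have key : ∀ y : ℝ, 0 ≤ y → 0 ≤ (y - x) * (aRT * (y - x) + E) := by
    intro y hy
    have h1 := h.2 l y hy
    have hs1 : ∑ k, Function.update p l y k = S + (y - x) := by
      rw [Finset.sum_update_of_mem (Finset.mem_univ l), ← Finset.erase_eq,
        Finset.sum_erase_eq_sub (Finset.mem_univ l)]
      ring
    have hs2 : ∑ k, (dem k - Function.update p l y k) = T + (x - y) := by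
      rw [Finset.sum_sub_distrib, hs1, hT, Finset.sum_sub_distrib]
      ring
    rw [expend, expend, hs1, hs2, Function.update_self, ← hS, ← hT, ← hx] at h1
    nlinarith [h1]
  constructor
  · by_contra hneg
    push_neg at hneg
    have ht : 0 < -E / (2 * aRT) := div_pos (by linarith) (by linarith)
    have := key (x + (-E / (2 * aRT))) (by linarith)
    have h2 : aRT * (-E / (2 * aRT)) = -E / 2 := by field_simp
    nlinarith
  · rcases eq_or_lt_of_le hx0 with h'|h'
    · rw [← h', zero_mul]
    · have hle : E ≤ 0 := by
        by_contra hpos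
        push_neg at hpos
        set t := min x (E / (2 * aRT)) with htdef
        have ht : 0 < t := lt_min h' (div_pos hpos (by linarith))
        have htx : t ≤ x := min_le_left _ _
        have htE : aRT * t ≤ E / 2 := by
          have := min_le_right x (E / (2 * aRT))
          calc aRT * t ≤ aRT * (E / (2 * aRT)) := by nlinarith
            _ = E / 2 := by field_simp
        have := key (x - t) (by linarith)
        rw [show x - t - x = -t by ring] at this
        nlinarith
      have hge : 0 ≤ E := by
        by_contra hneg
        push_neg at hneg
        have ht : 0 < -E / (2 * aRT) := div_pos (by linarith) (by linarith)
        have := key (x + (-E / (2 * aRT))) (by linarith)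
        have h2 : aRT * (-E / (2 * aRT)) = -E / 2 := by field_simp
        nlinarith
      have : E = 0 := le_antisymm hle hge
      rw [this, mul_zero]

set_option maxHeartbeats 1600000 in
/-- Real loads' day-ahead participation decreases with virtual bidding.
With `L ≥ 1` real loads of demands `d_l > 0`, `V ≥ 1` virtual bidders of demand `0`,
and `α^{RT} > α^{DA} > 0`, `β^{DA} ∈ ℝ`, at the (unique) Nash equilibrium the real
loads' total day-ahead participation equals
`∑_l d_l^{DA*} = (1 - (V+1) α^{DA}/((L+V+1) α^{RT})) ∑_l d_l`; this quantity is
strictly positive and strictly decreasing in `V`. -/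
theorem cournot_virtual_bidding_real_load_decreasing
    (L : ℕ) (hL : 1 ≤ L)
    (aDA aRT bDA : ℝ) (h0 : 0 < aDA) (hlt : aDA < aRT)
    (dl : Fin L → ℝ) (hdl : ∀ k, 0 < dl k) :
    (∀ V : ℕ, 1 ≤ V →
      ∀ p : Fin L ⊕ Fin V → ℝ,
        IsNash aDA aRT bDA (Sum.elim dl (fun _ => (0 : ℝ))) p →
        ∑ l, p (Sum.inl l)
          = (1 - ((V : ℝ) + 1) * aDA / (((L : ℝ) + (V : ℝ) + 1) * aRT))
            * ∑ l, dl l) ∧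
    (∀ V : ℕ, 1 ≤ V →
      0 < (1 - ((V : ℝ) + 1) * aDA / (((L : ℝ) + (V : ℝ) + 1) * aRT))
            * ∑ l, dl l) ∧
    StrictAnti (fun V : ℕ =>
      (1 - ((V : ℝ) + 1) * aDA / (((L : ℝ) + (V : ℝ) + 1) * aRT))
        * ∑ l, dl l) := by
  have hRT : 0 < aRT := h0.trans hlt
  haveI : NeZero L := ⟨by omega⟩
  have hD : 0 < ∑ l, dl l :=
    Finset.sum_pos (fun l _ => hdl l) Finset.univ_nonempty
  set D := ∑ l, dl l with hDdef
  refine ⟨?_, ?_, ?_⟩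
  · intro V hV p hp
    set dem : Fin L ⊕ Fin V → ℝ := Sum.elim dl (fun _ => (0 : ℝ)) with hdem
    set T := ∑ k, (dem k - p k) with hTdef
    have foc := fun k => nash_foc aDA aRT bDA hRT dem p hp k
    have hdeml : ∀ l, dem (Sum.inl l) = dl l := fun l => rfl
    have hdemv : ∀ v, dem (Sum.inr v) = 0 := fun v => rfl
    have hTsum : T = D - (∑ l, p (Sum.inl l)) - (∑ v, p (Sum.inr v)) := by
      rw [hTdef, Finset.sum_sub_distrib, Fintype.sum_sum_type, Fintype.sum_sum_type]
      simp [hdem]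
      ring
    have hTpos : 0 < T := by
      by_contra hc
      push_neg at hc
      have hv : ∀ v, p (Sum.inr v) = 0 := by
        intro v
        have h2 := (foc (Sum.inr v)).2
        rw [hdemv, ← hTdef] at h2
        rcases mul_eq_zero.1 h2 with h | h
        · exact h
        · have : p (Sum.inr v) = T := by nlinarith
          have := hp.1 (Sum.inr v)
          linarith
      have hl : ∀ l, aRT * p (Sum.inl l) ≤ (aRT - aDA) * dl l := by
        intro l
        have h2 := (foc (Sum.inl l)).2
        rw [hdeml, ← hTdef] at h2
        rcases mul_eq_zero.1 h2 with h | h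
        · rw [h]; nlinarith [hdl l]
        · nlinarith
      have hsum : aRT * ∑ l, p (Sum.inl l) ≤ (aRT - aDA) * D := by
        rw [Finset.mul_sum, hDdef, Finset.mul_sum]
        exact Finset.sum_le_sum fun l _ => hl l
      have hTval : aRT * T = aRT * D - aRT * ∑ l, p (Sum.inl l) := by
        rw [hTsum]
        simp [hv]
        ring
      nlinarith
    have hvirt : ∀ v, p (Sum.inr v) = T := by
      intro v
      obtain ⟨h1, h2⟩ := foc (Sum.inr v)
      rw [hdemv, ← hTdef] at h1 h2
      rcases mul_eq_zero.1 h2 with h | h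
      · exfalso; nlinarith
      · nlinarith
    have hload : ∀ l, aRT * p (Sum.inl l) = aRT * T + (aRT - aDA) * dl l := by
      intro l
      obtain ⟨h1, h2⟩ := foc (Sum.inl l)
      rw [hdeml, ← hTdef] at h1 h2
      rcases mul_eq_zero.1 h2 with h | h
      · exfalso; nlinarith [hdl l]
      · nlinarith
    have hsumload : aRT * ∑ l, p (Sum.inl l)
        = (L : ℝ) * (aRT * T) + (aRT - aDA) * D := by
      calc aRT * ∑ l, p (Sum.inl l) = ∑ l, aRT * p (Sum.inl l) :=
            Finset.mul_sum _ _ _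
        _ = ∑ l : Fin L, (aRT * T + (aRT - aDA) * dl l) :=
            Finset.sum_congr rfl fun l _ => hload l
        _ = (L : ℝ) * (aRT * T) + (aRT - aDA) * D := by
            rw [Finset.sum_add_distrib, Finset.sum_const, Finset.card_univ,
              Fintype.card_fin, nsmul_eq_mul, hDdef, ← Finset.mul_sum]
    have hsumvirt : ∑ v, p (Sum.inr v) = (V : ℝ) * T := by
      simp [hvirt, Finset.sum_const, Finset.card_univ, nsmul_eq_mul]
    have hTeq : aRT * T * ((L : ℝ) + (V : ℝ) + 1) = aDA * D := by
      have := hTsum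
      rw [hsumvirt] at this
      nlinarith [hsumload]
    -- conclude
    have hden : ((L : ℝ) + (V : ℝ) + 1) * aRT ≠ 0 := by positivity
    have hTval : T = aDA * D / (((L : ℝ) + (V : ℝ) + 1) * aRT) := by
      field_simp
      nlinarith [hTeq]
    have : ∑ l, p (Sum.inl l) = (L : ℝ) * T + (aRT - aDA) / aRT * D := by
      have h1 : aRT * ∑ l, p (Sum.inl l)
          = aRT * ((L : ℝ) * T + (aRT - aDA) / aRT * D) := by
        rw [hsumload]
        field_simp
      exact mul_left_cancel₀ (ne_of_gt hRT) h1
    rw [this, hTval]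
    field_simp
    ring
  · intro V hV
    have hnum : ((V : ℝ) + 1) * aDA < (((L : ℝ) + (V : ℝ) + 1) * aRT) := by
      have h1 : (1 : ℝ) ≤ (L : ℝ) := by exact_mod_cast hL
      have h2 : (0 : ℝ) ≤ (V : ℝ) := Nat.cast_nonneg V
      nlinarith
    have hden : (0 : ℝ) < ((L : ℝ) + (V : ℝ) + 1) * aRT := by positivity
    have : ((V : ℝ) + 1) * aDA / (((L : ℝ) + (V : ℝ) + 1) * aRT) < 1 :=
      (div_lt_one hden).2 hnum
    have : 0 < 1 - ((V : ℝ) + 1) * aDA / (((L : ℝ) + (V : ℝ) + 1) * aRT) := by linarith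
    exact mul_pos this hD
  · intro a b hab
    have hcast : (a : ℝ) < (b : ℝ) := by exact_mod_cast hab
    have hL1 : (1 : ℝ) ≤ (L : ℝ) := by exact_mod_cast hL
    have ha0 : (0 : ℝ) ≤ (a : ℝ) := Nat.cast_nonneg a
    have hdena : (0 : ℝ) < ((L : ℝ) + (a : ℝ) + 1) * aRT := by positivity
    have hdenb : (0 : ℝ) < ((L : ℝ) + (b : ℝ) + 1) * aRT := by positivity
    have hq : ((a : ℝ) + 1) * aDA / (((L : ℝ) + (a : ℝ) + 1) * aRT)
        < ((b : ℝ) + 1) * aDA / (((L : ℝ) + (b : ℝ) + 1) * aRT) := by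
      rw [div_lt_div_iff₀ hdena hdenb]
      have h1 : (0 : ℝ) < (b : ℝ) - (a : ℝ) := by linarith
      have h2 : (0 : ℝ) < (L : ℝ) := by linarith
      have key : 0 < aDA * aRT * (((b : ℝ) - (a : ℝ)) * (L : ℝ)) :=
        mul_pos (mul_pos h0 hRT) (mul_pos h1 h2)
      have hiden : ((b : ℝ) + 1) * aDA * (((L : ℝ) + (a : ℝ) + 1) * aRT)
          - ((a : ℝ) + 1) * aDA * (((L : ℝ) + (b : ℝ) + 1) * aRT)
          = aDA * aRT * (((b : ℝ) - (a : ℝ)) * (L : ℝ)) := by ring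
      linarith [key, hiden]
    simp only
    have : (1 - ((b : ℝ) + 1) * aDA / (((L : ℝ) + (b : ℝ) + 1) * aRT))
        < (1 - ((a : ℝ) + 1) * aDA / (((L : ℝ) + (a : ℝ) + 1) * aRT)) := by linarith
    exact mul_lt_mul_of_pos_right this hD
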